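/- (Danskin-type theorem for strongly convex inner problems.) Let E be a finite-dimensional real inner product space, let m > 0 and let g : E → ℝ be continuous and m-strongly convex. For every H ∈ E let y(H) denote the unique maximizer of J ↦ ⟪H, J⟫ − g(J) over E, and define φ : E → ℝ by φ(H) = ⟪H, y(H)⟫ − g(y(H)) (the supremum value). Then φ is convex and, for every H ∈ E, φ has a gradient at H equal to y(H), i.e., HasGradientAt φ (y H) H. -/

import Mathlib

open RealInnerProductSpace

/-- Danskin-type theorem for strongly convex inner problems: the value
function `φ(H) = ⟪H, y(H)⟫ − g(y(H))` of the maximization of `J ↦ ⟪H, J⟫ − g(J)` is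
convex and has gradient `y(H)` at every `H`. -/
theorem danskin_strongly_convex
    {E : Type*} [NormedAddCommGroup E] [InnerProductSpace ℝ E] [FiniteDimensional ℝ E]
    (m : ℝ) (hm : 0 < m) (g : E → ℝ) (hgcont : Continuous g)
    (hgconv : StrongConvexOn Set.univ m g)
    (y : E → E)
    (hy : ∀ H : E, ∀ J : E, ⟪H, J⟫ - g J ≤ ⟪H, y H⟫ - g (y H)) :
    ConvexOn ℝ Set.univ (fun H : E => ⟪H, y H⟫ - g (y H)) ∧
      ∀ H : E, HasGradientAt (fun H' : E => ⟪H', y H'⟫ - g (y H')) (y H) H := by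
  set φ : E → ℝ := fun H : E => ⟪H, y H⟫ - g (y H) with hφ
  -- key quantitative optimality inequality
  have key : ∀ H J : E, ⟪H, J⟫ - g J + m / 4 * ‖J - y H‖ ^ 2 ≤ φ H := by
    intro H J
    have hsc := hgconv.2 (Set.mem_univ (y H)) (Set.mem_univ J)
      (by norm_num : (0:ℝ) ≤ 1/2) (by norm_num : (0:ℝ) ≤ 1/2) (by norm_num)
    have hmax := hy H ((1/2 : ℝ) • y H + (1/2 : ℝ) • J)
    have hinner : ⟪H, (1/2 : ℝ) • y H + (1/2 : ℝ) • J⟫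
        = 1/2 * ⟪H, y H⟫ + 1/2 * ⟪H, J⟫ := by
      rw [inner_add_right, real_inner_smul_right, real_inner_smul_right]
    have hns : ‖y H - J‖ = ‖J - y H‖ := norm_sub_rev _ _
    simp only [smul_eq_mul] at hsc
    rw [hinner] at hmax
    rw [hns] at hsc
    simp only [hφ]
    nlinarith [sq_nonneg ‖J - y H‖]
  -- Lipschitz-type bound on the maximizer
  have hlip : ∀ H H' : E, ‖y H' - y H‖ ≤ 2 / m * ‖H' - H‖ := by
    intro H H'
    have k1 := key H (y H')
    have k2 := key H' (y H)
    have hns : ‖y H - y H'‖ = ‖y H' - y H‖ := norm_sub_rev _ _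
    rw [hns] at k2
    have hin : ⟪H' - H, y H' - y H⟫
        = ⟪H', y H'⟫ - ⟪H', y H⟫ - ⟪H, y H'⟫ + ⟪H, y H⟫ := by
      rw [inner_sub_left, inner_sub_right, inner_sub_right]; ring
    have hbound : m / 2 * ‖y H' - y H‖ ^ 2 ≤ ⟪H' - H, y H' - y H⟫ := by
      simp only [hφ] at k1 k2
      nlinarith
    have hcs : ⟪H' - H, y H' - y H⟫ ≤ ‖H' - H‖ * ‖y H' - y H‖ :=
      real_inner_le_norm _ _
    rcases eq_or_lt_of_le (norm_nonneg (y H' - y H)) with h0 | h0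
    · rw [← h0]; positivity
    · have : m / 2 * ‖y H' - y H‖ ^ 2 ≤ ‖H' - H‖ * ‖y H' - y H‖ := hbound.trans hcs
      rw [div_mul_eq_mul_div, le_div_iff₀ hm]
      nlinarith
  -- sandwich bounds for φ
  have hlow : ∀ H H' : E, ⟪H' - H, y H⟫ ≤ φ H' - φ H := by
    intro H H'
    have := hy H' (y H)
    have hin : ⟪H' - H, y H⟫ = ⟪H', y H⟫ - ⟪H, y H⟫ := inner_sub_left _ _ _
    simp only [hφ] at this ⊢
    linarith
  have hup : ∀ H H' : E, φ H' - φ H ≤ ⟪H' - H, y H'⟫ := by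
    intro H H'
    have := hy H (y H')
    have hin : ⟪H' - H, y H'⟫ = ⟪H', y H'⟫ - ⟪H, y H'⟫ := inner_sub_left _ _ _
    simp only [hφ] at this ⊢
    linarith
  constructor
  · refine ⟨convex_univ, ?_⟩
    intro H₁ _ H₂ _ a b ha hb hab
    set M := a • H₁ + b • H₂
    have h1 := hy H₁ (y M)
    have h2 := hy H₂ (y M)
    have hin : ⟪M, y M⟫ = a * ⟪H₁, y M⟫ + b * ⟪H₂, y M⟫ := by
      simp only [M, inner_add_left, real_inner_smul_left]
    simp only [hφ, smul_eq_mul]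
    rw [hin]
    have hg : a * g (y M) + b * g (y M) = g (y M) := by rw [← add_mul, hab, one_mul]
    have h1' := mul_le_mul_of_nonneg_left h1 ha
    have h2' := mul_le_mul_of_nonneg_left h2 hb
    rw [mul_sub] at h1' h2'
    linarith
  · intro H
    rw [hasGradientAt_iff_isLittleO, Asymptotics.isLittleO_iff]
    intro ε hε
    have hev : ∀ᶠ H' in nhds H, ‖H' - H‖ < ε * m / 2 := by
      have : Metric.ball H (ε * m / 2) ∈ nhds H :=
        Metric.ball_mem_nhds _ (by positivity)
      filter_upwards [this] with H' hH'
      rwa [Metric.mem_ball, dist_eq_norm] at hH'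
    filter_upwards [hev] with H' hH'
    have hR0 : 0 ≤ φ H' - φ H - ⟪y H, H' - H⟫ := by
      have := hlow H H'
      rw [real_inner_comm (y H)] at this
      linarith
    have hR1 : φ H' - φ H - ⟪y H, H' - H⟫ ≤ 2 / m * ‖H' - H‖ * ‖H' - H‖ := by
      have h1 := hup H H'
      have h2 : ⟪H' - H, y H' - y H⟫ ≤ ‖H' - H‖ * ‖y H' - y H‖ :=
        real_inner_le_norm _ _
      have h3 := hlip H H'
      have hin : ⟪H' - H, y H'⟫ = ⟪H' - H, y H⟫ + ⟪H' - H, y H' - y H⟫ := by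
        rw [inner_sub_right]; ring
      have hn : (0:ℝ) ≤ ‖H' - H‖ := norm_nonneg _
      have h4 : ‖H' - H‖ * ‖y H' - y H‖ ≤ ‖H' - H‖ * (2 / m * ‖H' - H‖) :=
        mul_le_mul_of_nonneg_left h3 hn
      have h5 : inner ℝ (y H) (H' - H) = ⟪H' - H, y H⟫ := real_inner_comm _ _
      rw [h5]
      calc φ H' - φ H - ⟪H' - H, y H⟫ ≤ ⟪H' - H, y H'⟫ - ⟪H' - H, y H⟫ := by linarith
        _ = ⟪H' - H, y H' - y H⟫ := by rw [inner_sub_right]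
        _ ≤ ‖H' - H‖ * ‖y H' - y H‖ := h2
        _ ≤ ‖H' - H‖ * (2 / m * ‖H' - H‖) := h4
        _ = 2 / m * ‖H' - H‖ * ‖H' - H‖ := by ring
    rw [Real.norm_eq_abs, abs_of_nonneg hR0]
    have hn : (0:ℝ) ≤ ‖H' - H‖ := norm_nonneg _
    calc φ H' - φ H - ⟪y H, H' - H⟫ ≤ 2 / m * ‖H' - H‖ * ‖H' - H‖ := hR1
      _ ≤ ε * ‖H' - H‖ := by
          have : 2 / m * ‖H' - H‖ ≤ ε := by
            rw [div_mul_eq_mul_div, div_le_iff₀ hm]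
            nlinarith
          nlinarith
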